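/- If every pair of distinct points in a set C ⊂ R^n has Euclidean distance greater than 2√(nN), then for any L distinct points x_1,...,x_L ∈ C the squared Chebyshev radius satisfies rad²(x_1,...,x_L) ≥ (2(L−1)/L)·nN. Consequently, a sphere packing with minimum distance exceeding 2√(nN) is an (L−1)-multiple packing with radius √(nN') for any N' < 2(L−1)N/L. -/

import Mathlib

open Finset in
lemma sum_sq_dist_bound {n L : ℕ} (a : Fin L → EuclideanSpace ℝ (Fin n)) :
    ∑ i, ∑ j, ‖a i - a j‖^2 ≤ 2 * L * ∑ i, ‖a i‖^2 := by
  have h : ∀ i j : Fin L, ‖a i - a j‖^2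
      = ‖a i‖^2 - 2 * (inner ℝ (a i) (a j) : ℝ) + ‖a j‖^2 := by
    intro i j
    have := norm_sub_sq_real (a i) (a j)
    linarith
  have key : ∑ i, ∑ j, ‖a i - a j‖^2
      = 2 * L * ∑ i, ‖a i‖^2 - 2 * ‖∑ i, a i‖^2 := by
    rw [show (‖∑ i, a i‖^2 : ℝ) = inner ℝ (∑ i, a i) (∑ i, a i) from
      (real_inner_self_eq_norm_sq _).symm, sum_inner]
    simp_rw [inner_sum, h, Finset.sum_add_distrib, Finset.sum_sub_distrib,
      Finset.sum_const, Finset.card_univ, Fintype.card_fin, nsmul_eq_mul,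
      ← Finset.mul_sum]
    ring
  have : (0:ℝ) ≤ ‖∑ i, a i‖^2 := sq_nonneg _
  linarith

/-- A sphere packing with minimum distance exceeding `2√(nN)` has every `L`-list of
squared Chebyshev radius at least `(2(L-1)/L)·nN`; consequently it is an
`(L-1)`-multiple packing with radius `√(nN')` for any `N' < 2(L-1)N/L`. -/
theorem sphere_packing_to_multiple_packing
    (n L : ℕ) (N : ℝ) (hN : 0 < N) (hn : 1 ≤ n) (hL : 2 ≤ L)
    (C : Set (EuclideanSpace ℝ (Fin n)))
    (hC : ∀ x ∈ C, ∀ y ∈ C, x ≠ y → 2 * Real.sqrt (n * N) < ‖x - y‖)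
    (x : Fin L → EuclideanSpace ℝ (Fin n))
    (hx : ∀ i, x i ∈ C) (hinj : Function.Injective x) :
    2 * ((L : ℝ) - 1) / L * (n * N) ≤
      (⨅ y : EuclideanSpace ℝ (Fin n), ⨆ i : Fin L, ‖x i - y‖ ^ 2) ∧
    ∀ N' : ℝ, N' < 2 * ((L : ℝ) - 1) * N / L →
      (n : ℝ) * N' < ⨅ y : EuclideanSpace ℝ (Fin n), ⨆ i : Fin L, ‖x i - y‖ ^ 2 := by
  have hLpos : (0:ℝ) < L := by positivity
  have hnN : (0:ℝ) ≤ (n:ℝ) * N := by positivity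
  have hL1 : (1:ℝ) ≤ (L:ℝ) := by exact_mod_cast Nat.one_le_of_lt hL
  -- pairwise squared distance bound
  have hpair : ∀ i j : Fin L, i ≠ j → 4 * ((n:ℝ) * N) ≤ ‖x i - x j‖ ^ 2 := by
    intro i j hij
    have h1 := hC (x i) (hx i) (x j) (hx j) (fun h => hij (hinj h))
    have h2 : (0:ℝ) ≤ 2 * Real.sqrt (n * N) := by positivity
    have h3 : (2 * Real.sqrt (n * N)) ^ 2 ≤ ‖x i - x j‖ ^ 2 := by
      apply sq_le_sq' <;> nlinarith
    rw [mul_pow, Real.sq_sqrt hnN] at h3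
    linarith
  -- main pointwise bound
  have main : ∀ y : EuclideanSpace ℝ (Fin n),
      2 * ((L : ℝ) - 1) / L * (n * N) ≤ ⨆ i : Fin L, ‖x i - y‖ ^ 2 := by
    intro y
    set a : Fin L → EuclideanSpace ℝ (Fin n) := fun i => x i - y with ha
    have hsub : ∀ i j, a i - a j = x i - x j := by
      intro i j; simp [ha]
    -- lower bound on the double sum
    have hlow : (L:ℝ) * ((L:ℝ) - 1) * (4 * ((n:ℝ) * N)) ≤ ∑ i, ∑ j, ‖a i - a j‖^2 := by
      have inner_bd : ∀ i : Fin L,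
          ((L:ℝ) - 1) * (4 * ((n:ℝ) * N)) ≤ ∑ j, ‖a i - a j‖^2 := by
        intro i
        have : ∑ j, ‖a i - a j‖^2
            = ∑ j ∈ Finset.univ.erase i, ‖a i - a j‖^2 := by
          rw [← Finset.sum_erase]
          simp
        rw [this]
        have hcard : (Finset.univ.erase i).card = L - 1 := by
          rw [Finset.card_erase_of_mem (Finset.mem_univ i), Finset.card_univ,
            Fintype.card_fin]
        calc ((L:ℝ) - 1) * (4 * ((n:ℝ) * N))
            = ((Finset.univ.erase i).card : ℝ) * (4 * ((n:ℝ) * N)) := by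
              rw [hcard]
              have : ((L - 1 : ℕ) : ℝ) = (L:ℝ) - 1 := by
                have : 1 ≤ L := by omega
                push_cast [this]; ring
              rw [this]
          _ ≤ ∑ j ∈ Finset.univ.erase i, ‖a i - a j‖^2 := by
              rw [← nsmul_eq_mul]
              apply Finset.card_nsmul_le_sum
              intro j hj
              rw [hsub]
              exact hpair i j (fun h => (Finset.mem_erase.mp hj).1 h.symm)
      calc (L:ℝ) * ((L:ℝ) - 1) * (4 * ((n:ℝ) * N))
          = ∑ _i : Fin L, ((L:ℝ) - 1) * (4 * ((n:ℝ) * N)) := by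
            rw [Finset.sum_const, Finset.card_univ, Fintype.card_fin,
              nsmul_eq_mul]; ring
        _ ≤ ∑ i, ∑ j, ‖a i - a j‖^2 := Finset.sum_le_sum fun i _ => inner_bd i
    have hup := sum_sq_dist_bound a
    -- sum bounded by L times the sup
    have hsupb : BddAbove (Set.range fun i : Fin L => ‖x i - y‖ ^ 2) :=
      Set.Finite.bddAbove (Set.finite_range _)
    have hsum_sup : ∑ i, ‖a i‖^2 ≤ (L:ℝ) * ⨆ i : Fin L, ‖x i - y‖ ^ 2 := by
      have : ∀ i : Fin L, ‖a i‖^2 ≤ ⨆ i : Fin L, ‖x i - y‖ ^ 2 := by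
        intro i
        exact le_ciSup hsupb i
      calc ∑ i, ‖a i‖^2 ≤ ∑ _i : Fin L, ⨆ i : Fin L, ‖x i - y‖ ^ 2 :=
            Finset.sum_le_sum fun i _ => this i
        _ = (L:ℝ) * ⨆ i : Fin L, ‖x i - y‖ ^ 2 := by
            rw [Finset.sum_const, Finset.card_univ, Fintype.card_fin, nsmul_eq_mul]
    -- combine
    rw [div_mul_eq_mul_div, div_le_iff₀ hLpos]
    nlinarith
  have hinf : 2 * ((L : ℝ) - 1) / L * (n * N) ≤
      ⨅ y : EuclideanSpace ℝ (Fin n), ⨆ i : Fin L, ‖x i - y‖ ^ 2 :=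
    le_ciInf main
  refine ⟨hinf, fun N' hN' => lt_of_lt_of_le ?_ hinf⟩
  have hnpos : (0:ℝ) < n := by exact_mod_cast hn
  have : (n:ℝ) * N' < (n:ℝ) * (2 * ((L : ℝ) - 1) * N / L) :=
    (mul_lt_mul_iff_right₀ hnpos).mpr hN'
  calc (n:ℝ) * N' < (n:ℝ) * (2 * ((L : ℝ) - 1) * N / L) := this
    _ = 2 * ((L : ℝ) - 1) / L * ((n:ℝ) * N) := by ring
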